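/- Let p be a real number with log(4)/log(6) ≤ p ≤ 1, and let n, r be integers with n ≥ 3 and 2 ≤ r ≤ n − 1. Let x_{r+1}, …, x_n ≥ 0, u ≥ 0, and y_1, …, y_{r−1} be real numbers with y_i ≥ u for every 1 ≤ i ≤ r−1, and suppose Σ_{i=r+1}^{n} x_i + n·u = Σ_{i=1}^{r−1} y_i. Then Σ_{i=r+1}^{n} x_i^p + (r−1)·u^p ≤ (1 − 1/n)^p · ( Σ_{i=r+1}^{n} x_i^p + Σ_{i=1}^{r−1} y_i^p ). -/

import Mathlib

private lemma holder2 {p : ℝ} (hp : 0 < p) (hp1 : p ≤ 1) {s t a b : ℝ}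
    (hs : 0 ≤ s) (ht : 0 ≤ t) (ha : 0 ≤ a) (hb : 0 ≤ b) :
    s ^ (1 - p) * a ^ p + t ^ (1 - p) * b ^ p ≤ (s + t) ^ (1 - p) * (a + b) ^ p := by
  rcases eq_or_lt_of_le hp1 with rfl | hplt
  · simp
  have h1p : 0 < 1 - p := by linarith
  by_cases hab : a + b = 0
  · have ha0 : a = 0 := le_antisymm (by linarith) ha
    have hb0 : b = 0 := le_antisymm (by linarith) hb
    simp [ha0, hb0, Real.zero_rpow hp.ne']
  by_cases hst : s + t = 0
  · have hs0 : s = 0 := le_antisymm (by linarith) hs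
    have ht0 : t = 0 := le_antisymm (by linarith) ht
    simp [hs0, ht0, Real.zero_rpow h1p.ne']
  have hst' : 0 < s + t := lt_of_le_of_ne (by positivity) (Ne.symm hst)
  have hab' : 0 < a + b := lt_of_le_of_ne (by positivity) (Ne.symm hab)
  have hstp : (0:ℝ) < (s + t) ^ (1 - p) := Real.rpow_pos_of_pos hst' _
  have habp : (0:ℝ) < (a + b) ^ p := Real.rpow_pos_of_pos hab' _
  have e1 : s ^ (1 - p) * a ^ p
      = (s / (s + t)) ^ (1 - p) * (a / (a + b)) ^ p * ((s + t) ^ (1 - p) * (a + b) ^ p) := by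
    rw [Real.div_rpow hs hst'.le, Real.div_rpow ha hab'.le]
    field_simp
  have e2 : t ^ (1 - p) * b ^ p
      = (t / (s + t)) ^ (1 - p) * (b / (a + b)) ^ p * ((s + t) ^ (1 - p) * (a + b) ^ p) := by
    rw [Real.div_rpow ht hst'.le, Real.div_rpow hb hab'.le]
    field_simp
  have g1 : (s / (s + t)) ^ (1 - p) * (a / (a + b)) ^ p
      ≤ (1 - p) * (s / (s + t)) + p * (a / (a + b)) :=
    Real.geom_mean_le_arith_mean2_weighted (by linarith) hp.le (by positivity) (by positivity)
      (by ring)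
  have g2 : (t / (s + t)) ^ (1 - p) * (b / (a + b)) ^ p
      ≤ (1 - p) * (t / (s + t)) + p * (b / (a + b)) :=
    Real.geom_mean_le_arith_mean2_weighted (by linarith) hp.le (by positivity) (by positivity)
      (by ring)
  have gsum : ((1 - p) * (s / (s + t)) + p * (a / (a + b)))
      + ((1 - p) * (t / (s + t)) + p * (b / (a + b))) = 1 := by
    field_simp
    ring
  calc s ^ (1 - p) * a ^ p + t ^ (1 - p) * b ^ p
      = ((s / (s + t)) ^ (1 - p) * (a / (a + b)) ^ p
          + (t / (s + t)) ^ (1 - p) * (b / (a + b)) ^ p)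
          * ((s + t) ^ (1 - p) * (a + b) ^ p) := by rw [e1, e2]; ring
    _ ≤ 1 * ((s + t) ^ (1 - p) * (a + b) ^ p) := by
        apply mul_le_mul_of_nonneg_right _ (by positivity)
        linarith
    _ = (s + t) ^ (1 - p) * (a + b) ^ p := one_mul _

private lemma jensen_rpow {p : ℝ} (hp : 0 < p) (hp1 : p ≤ 1) (A : Finset ℕ) (f : ℕ → ℝ)
    (hf : ∀ i ∈ A, 0 ≤ f i) :
    ∑ i ∈ A, f i ^ p ≤ (A.card : ℝ) ^ (1 - p) * (∑ i ∈ A, f i) ^ p := by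
  revert hf
  induction A using Finset.cons_induction with
  | empty => intro _; simp [Real.zero_rpow hp.ne']
  | cons a A ha IH =>
    intro hf
    rw [Finset.sum_cons, Finset.sum_cons, Finset.card_cons]
    have hfa : 0 ≤ f a := hf a (Finset.mem_cons_self a A)
    have hfA : ∀ i ∈ A, 0 ≤ f i := fun i hi => hf i (Finset.mem_cons.2 (Or.inr hi))
    have hsA : 0 ≤ ∑ i ∈ A, f i := Finset.sum_nonneg hfA
    have h := holder2 hp hp1 (zero_le_one) (Nat.cast_nonneg A.card) hfa hsA
    rw [Real.one_rpow, one_mul] at h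
    have hc : ((A.card + 1 : ℕ) : ℝ) = 1 + (A.card : ℝ) := by push_cast; ring
    rw [hc]
    linarith [IH hfA]

private lemma concave_two {p : ℝ} (hp : 0 < p) (hp1 : p ≤ 1) {u a b : ℝ}
    (hu : 0 ≤ u) (ha : 0 ≤ a) (hb : 0 ≤ b) :
    (u + a + b) ^ p + u ^ p ≤ (u + a) ^ p + (u + b) ^ p := by
  rcases eq_or_lt_of_le ha with rfl | ha'
  · simp [add_assoc]; rw [add_comm ((u+b)^p)]
  rcases eq_or_lt_of_le hb with rfl | hb'
  · simp
  have hab : 0 < a + b := by linarith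
  set l := a / (a + b) with hl
  set m := b / (a + b) with hm
  have hlm : l + m = 1 := by rw [hl, hm, ← add_div, div_self hab.ne']
  have hl0 : 0 < l := by positivity
  have hm0 : 0 < m := by positivity
  have key : ∀ w v : ℝ, 0 < w → 0 < v → w + v = 1 →
      w * (u + a + b) ^ p + v * u ^ p ≤ (w * (u + a + b) + v * u) ^ p := by
    intro w v hw hv hwv
    have h := holder2 hp hp1 hw.le hv.le
      (by positivity : (0:ℝ) ≤ w * (u + a + b)) (by positivity : (0:ℝ) ≤ v * u)
    rw [hwv, Real.one_rpow, one_mul] at h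
    have e1 : w ^ (1 - p) * (w * (u + a + b)) ^ p = w * (u + a + b) ^ p := by
      rw [Real.mul_rpow hw.le (by positivity), ← mul_assoc, ← Real.rpow_add hw]
      norm_num
    have e2 : v ^ (1 - p) * (v * u) ^ p = v * u ^ p := by
      rw [Real.mul_rpow hv.le hu, ← mul_assoc, ← Real.rpow_add hv]
      norm_num
    rw [e1, e2] at h
    exact h
  have h1 := key l m hl0 hm0 hlm
  have h2 := key m l hm0 hl0 (by linarith)
  have e1 : l * (u + a + b) + m * u = u + a := by
    rw [hl, hm]; field_simp; ring
  have e2 : m * (u + a + b) + l * u = u + b := by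
    rw [hl, hm]; field_simp; ring
  rw [e1] at h1
  rw [e2] at h2
  have h3 : l * (u + a + b) ^ p + m * (u + a + b) ^ p = (u + a + b) ^ p := by
    rw [← add_mul, hlm, one_mul]
  have h4 : l * u ^ p + m * u ^ p = u ^ p := by
    rw [← add_mul, hlm, one_mul]
  linarith

private lemma shift_subadd {p : ℝ} (hp : 0 < p) (hp1 : p ≤ 1) {u : ℝ} (hu : 0 ≤ u)
    (A : Finset ℕ) (hA : A.Nonempty) (z : ℕ → ℝ) (hz : ∀ i ∈ A, 0 ≤ z i) :
    (u + ∑ i ∈ A, z i) ^ p + ((A.card : ℝ) - 1) * u ^ p ≤ ∑ i ∈ A, (u + z i) ^ p := by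
  revert hz
  induction hA using Finset.Nonempty.cons_induction with
  | singleton a => intro hz; simp
  | cons a A ha hA IH =>
    intro hz
    rw [Finset.sum_cons, Finset.sum_cons, Finset.card_cons]
    have hza : 0 ≤ z a := hz a (Finset.mem_cons_self a A)
    have hzA : ∀ i ∈ A, 0 ≤ z i := fun i hi => hz i (Finset.mem_cons.2 (Or.inr hi))
    have hsA : 0 ≤ ∑ i ∈ A, z i := Finset.sum_nonneg hzA
    have h2 := concave_two hp hp1 hu hza hsA
    have hc : ((A.card + 1 : ℕ) : ℝ) = (A.card : ℝ) + 1 := by push_cast; ring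
    rw [hc]
    have := IH hzA
    have hrw : u + (z a + ∑ i ∈ A, z i) = u + z a + ∑ i ∈ A, z i := by ring
    rw [hrw]
    linarith


private lemma key_poly (M K : ℝ) (hM : 1 ≤ M) (hK : 1 ≤ K) (hMK : 3 ≤ M + K) :
    (M + 2*K + 1)^4 ≤ ((M + K) * (M + 2))^3 * K := by
  obtain ⟨a, ha, rfl⟩ : ∃ a, 0 ≤ a ∧ M = a + 1 := ⟨M - 1, by linarith, by ring⟩
  obtain ⟨b, hb, rfl⟩ : ∃ b, 0 ≤ b ∧ K = b + 1 := ⟨K - 1, by linarith, by ring⟩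
  have he : 0 ≤ a + b - 1 := by linarith
  nlinarith [he, sq_nonneg (102*b - 128), mul_nonneg (pow_nonneg ha 0) (pow_nonneg hb 3), mul_nonneg (pow_nonneg ha 0) (pow_nonneg hb 4), mul_nonneg (pow_nonneg ha 1) (pow_nonneg hb 1), mul_nonneg (pow_nonneg ha 1) (pow_nonneg hb 2), mul_nonneg (pow_nonneg ha 1) (pow_nonneg hb 3), mul_nonneg (pow_nonneg ha 1) (pow_nonneg hb 4), mul_nonneg (pow_nonneg ha 2) (pow_nonneg hb 0), mul_nonneg (pow_nonneg ha 2) (pow_nonneg hb 1), mul_nonneg (pow_nonneg ha 2) (pow_nonneg hb 2), mul_nonneg (pow_nonneg ha 2) (pow_nonneg hb 3), mul_nonneg (pow_nonneg ha 2) (pow_nonneg hb 4), mul_nonneg (pow_nonneg ha 3) (pow_nonneg hb 0), mul_nonneg (pow_nonneg ha 3) (pow_nonneg hb 1), mul_nonneg (pow_nonneg ha 3) (pow_nonneg hb 2), mul_nonneg (pow_nonneg ha 3) (pow_nonneg hb 3), mul_nonneg (pow_nonneg ha 3) (pow_nonneg hb 4), mul_nonneg (pow_nonneg ha 4) (pow_nonneg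 hb 0), mul_nonneg (pow_nonneg ha 4) (pow_nonneg hb 1), mul_nonneg (pow_nonneg ha 4) (pow_nonneg hb 2), mul_nonneg (pow_nonneg ha 4) (pow_nonneg hb 3), mul_nonneg (pow_nonneg ha 5) (pow_nonneg hb 0), mul_nonneg (pow_nonneg ha 5) (pow_nonneg hb 1), mul_nonneg (pow_nonneg ha 5) (pow_nonneg hb 2), mul_nonneg (pow_nonneg ha 6) (pow_nonneg hb 0), mul_nonneg (pow_nonneg ha 6) (pow_nonneg hb 1)]

private lemma key_rpow {p : ℝ} (hp34 : 3/4 ≤ p) (hp1 : p ≤ 1) (h64 : (4:ℝ) ≤ 6 ^ p)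
    {N M K : ℝ} (hN : N = M + K + 1) (hM : 1 ≤ M) (hK : 1 ≤ K)
    (hcase : (M = 1 ∧ K = 1) ∨ 3 ≤ M + K) :
    N + K ≤ (N - 1) ^ p * (K ^ (1 - p) * (M + 2) ^ p) := by
  have hp0 : (0:ℝ) < p := by linarith
  rcases hcase with ⟨hM1, hK1⟩ | hMK
  · subst hM1; subst hK1
    rw [hN]
    norm_num [Real.one_rpow]
    calc (4:ℝ) ≤ 6 ^ p := h64
      _ = ((2:ℝ) * 3) ^ p := by norm_num
      _ = 2 ^ p * 3 ^ p := Real.mul_rpow (by norm_num) (by norm_num)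
  · have hK0 : (0:ℝ) < K := by linarith
    have hM2 : (0:ℝ) < M + 2 := by linarith
    have hMK0 : (0:ℝ) < M + K := by linarith
    have hNK0 : (0:ℝ) < N + K := by rw [hN]; linarith
    set R := (M + K) * (M + 2) / K with hR
    have hR0 : (0:ℝ) < R := by positivity
    have hR1 : 1 ≤ R := by
      rw [hR, le_div_iff₀ hK0]
      nlinarith
    have hpoly : ((N + K)/K) ^ (4:ℕ) ≤ R ^ (3:ℕ) := by
      rw [div_pow, hR, div_pow, div_le_div_iff₀ (by positivity) (by positivity)]
      have h := key_poly M K hM hK hMK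
      have e : N + K = M + 2*K + 1 := by rw [hN]; ring
      rw [e]
      calc (M + 2*K + 1) ^ 4 * K ^ 3 ≤ (((M + K) * (M + 2)) ^ 3 * K) * K ^ 3 := by
            apply mul_le_mul_of_nonneg_right h (by positivity)
        _ = ((M + K) * (M + 2)) ^ 3 * K ^ 4 := by ring
    have hS1 : (0:ℝ) ≤ (N + K)/K := by positivity
    have h1 : (N + K)/K ≤ R ^ ((3:ℝ)/4) := by
      have e3 : R ^ ((3:ℝ)/4) = (R ^ (3:ℕ)) ^ ((1:ℝ)/4) := by
        rw [← Real.rpow_natCast R 3, ← Real.rpow_mul hR0.le]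
        norm_num
      have e4 : (N + K)/K = (((N + K)/K) ^ (4:ℕ)) ^ ((1:ℝ)/4) := by
        rw [← Real.rpow_natCast ((N+K)/K) 4, ← Real.rpow_mul hS1]
        norm_num
      rw [e3, e4]
      exact Real.rpow_le_rpow (by positivity) hpoly (by norm_num)
    have h2 : R ^ ((3:ℝ)/4) ≤ R ^ p := Real.rpow_le_rpow_of_exponent_le hR1 hp34
    have hfin : (N + K)/K ≤ R ^ p := h1.trans h2
    have hRp : R ^ p = (M + K) ^ p * (M + 2) ^ p / K ^ p := by
      rw [hR, Real.div_rpow (by positivity) hK0.le, Real.mul_rpow hMK0.le hM2.le]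
    have hKp0 : (0:ℝ) < K ^ p := Real.rpow_pos_of_pos hK0 p
    have hNK1 : N - 1 = M + K := by rw [hN]; ring
    calc N + K = ((N + K)/K) * K := by field_simp
      _ ≤ R ^ p * K := mul_le_mul_of_nonneg_right hfin hK0.le
      _ = (N - 1) ^ p * (K ^ (1 - p) * (M + 2) ^ p) := by
          rw [hRp, hNK1, Real.rpow_sub hK0, Real.rpow_one]
          field_simp


/-- the key inequality controlling the contribution of the smallest
vertex value above the mean, in the induction proving the sharp `p`-variation bound on
the complete graph `K_n` for `log 4 / log 6 ≤ p ≤ 1`. -/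
theorem kn_induction_key_inequality (p : ℝ)
    (hp0 : Real.log 4 / Real.log 6 ≤ p) (hp1 : p ≤ 1)
    (n r : ℕ) (hn : 3 ≤ n) (hr : 2 ≤ r) (hrn : r ≤ n - 1)
    (x y : ℕ → ℝ) (u : ℝ) (hu : 0 ≤ u)
    (hx : ∀ i ∈ Finset.Icc (r + 1) n, 0 ≤ x i)
    (hy : ∀ i ∈ Finset.Icc 1 (r - 1), u ≤ y i)
    (hsum : ∑ i ∈ Finset.Icc (r + 1) n, x i + (n : ℝ) * u =
      ∑ i ∈ Finset.Icc 1 (r - 1), y i) :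
    ∑ i ∈ Finset.Icc (r + 1) n, x i ^ p + ((r : ℝ) - 1) * u ^ p ≤
      (1 - 1 / (n : ℝ)) ^ p *
        (∑ i ∈ Finset.Icc (r + 1) n, x i ^ p + ∑ i ∈ Finset.Icc 1 (r - 1), y i ^ p) := by
  -- numeric facts about p
  have hlog6 : 0 < Real.log 6 := Real.log_pos (by norm_num)
  have hp34 : (3:ℝ)/4 ≤ p := by
    refine le_trans ?_ hp0
    rw [div_le_div_iff₀ (by norm_num) hlog6]
    have h : Real.log ((6:ℝ) ^ (3:ℕ)) ≤ Real.log ((4:ℝ) ^ (4:ℕ)) :=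
      Real.log_le_log (by positivity) (by norm_num)
    rw [Real.log_pow, Real.log_pow] at h
    push_cast at h
    linarith
  have hp' : (0:ℝ) < p := by linarith
  have h64 : (4:ℝ) ≤ 6 ^ p := by
    have h6 : (6:ℝ) ^ (Real.log 4 / Real.log 6) = 4 := by
      rw [Real.rpow_def_of_pos (by norm_num : (0:ℝ) < 6), mul_comm,
        div_mul_cancel₀ _ hlog6.ne']
      exact Real.exp_log (by norm_num)
    calc (4:ℝ) = 6 ^ (Real.log 4 / Real.log 6) := h6.symm
      _ ≤ 6 ^ p := Real.rpow_le_rpow_of_exponent_le (by norm_num) hp0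
  -- setup
  have hN3 : (3:ℝ) ≤ (n:ℝ) := by exact_mod_cast hn
  have hrN : (r:ℝ) + 1 ≤ (n:ℝ) := by
    have h : r + 1 ≤ n := by omega
    exact_mod_cast h
  have hr2 : (2:ℝ) ≤ (r:ℝ) := by exact_mod_cast hr
  set N := (n:ℝ) with hNdef
  set K := (r:ℝ) - 1 with hKdef
  set M := N - (r:ℝ) with hMdef
  set X := ∑ i ∈ Finset.Icc (r+1) n, x i with hXdef
  set S := ∑ i ∈ Finset.Icc (r+1) n, x i ^ p with hSdef
  set Y := ∑ i ∈ Finset.Icc 1 (r-1), y i with hYdef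
  set T := ∑ i ∈ Finset.Icc 1 (r-1), y i ^ p with hTdef
  clear_value N K M X S Y T
  have hK1 : (1:ℝ) ≤ K := by rw [hKdef]; linarith
  have hM1 : (1:ℝ) ≤ M := by rw [hMdef, hNdef]; linarith
  have hX0 : 0 ≤ X := by rw [hXdef]; exact Finset.sum_nonneg hx
  have hcard1 : (((Finset.Icc (r+1) n).card : ℕ) : ℝ) = M := by
    have e : (Finset.Icc (r+1) n).card = n - r := by rw [Nat.card_Icc]; omega
    rw [e, Nat.cast_sub (by omega), hMdef, hNdef]
  have hcard2 : (((Finset.Icc 1 (r-1)).card : ℕ) : ℝ) = K := by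
    have e : (Finset.Icc 1 (r-1)).card = r - 1 := by rw [Nat.card_Icc]; omega
    rw [e, Nat.cast_sub (by omega), hKdef]
    push_cast
    ring
  -- Jensen bound on S
  have hJen : S ≤ M ^ (1-p) * X ^ p := by
    have h := jensen_rpow hp' hp1 (Finset.Icc (r+1) n) x hx
    rwa [hcard1, ← hSdef, ← hXdef] at h
  -- shift subadditivity bound on T
  have hAne : (Finset.Icc 1 (r-1)).Nonempty := by rw [Finset.nonempty_Icc]; omega
  have hshift := shift_subadd hp' hp1 hu (Finset.Icc 1 (r-1)) hAne (fun i => y i - u)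
      (fun i hi => by simpa using sub_nonneg.2 (hy i hi))
  have hyu : ∀ i, u + (y i - u) = y i := fun i => by ring
  simp only [hyu] at hshift
  have hzsum : ∑ i ∈ Finset.Icc 1 (r-1), (y i - u) = Y - K * u := by
    rw [Finset.sum_sub_distrib, Finset.sum_const, nsmul_eq_mul, hcard2, hYdef]
  rw [hzsum, hcard2, ← hTdef] at hshift
  have hWe : u + (Y - K * u) = X + (M + 2) * u := by
    have hYX : Y = X + N * u := hsum.symm
    rw [hYX, hMdef, hKdef]
    ring
  rw [hWe] at hshift
  -- hshift : (X + (M+2)*u)^p + (K-1)*u^p ≤ T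
  -- concavity split
  have hMu : (0:ℝ) ≤ (M + 2) * u := mul_nonneg (by linarith) hu
  have hsplit := holder2 hp' hp1 (by linarith : (0:ℝ) ≤ M) (by linarith : (0:ℝ) ≤ K) hX0 hMu
  have hMK : M + K = N - 1 := by rw [hMdef, hKdef]; ring
  rw [hMK] at hsplit
  -- hsplit : M^(1-p)*X^p + K^(1-p)*((M+2)*u)^p ≤ (N-1)^(1-p)*(X+(M+2)*u)^p
  set c := 1 - 1/N with hcdef
  clear_value c
  have hNpos : (0:ℝ) < N := by linarith
  have hc0 : (0:ℝ) < c := by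
    rw [hcdef]
    have : 1/N ≤ 1/3 := by rw [div_le_div_iff₀ hNpos (by norm_num)]; linarith
    linarith
  have hc1 : c ≤ 1 := by
    rw [hcdef]
    have : (0:ℝ) < 1/N := by positivity
    linarith
  have hcp_ge : c ≤ c ^ p := by
    calc c = c ^ (1:ℝ) := (Real.rpow_one c).symm
      _ ≤ c ^ p := Real.rpow_le_rpow_of_exponent_ge hc0 hc1 hp1
  have hcp1 : c ^ p ≤ 1 := Real.rpow_le_one hc0.le hc1 hp'.le
  have hcp0 : (0:ℝ) < c ^ p := Real.rpow_pos_of_pos hc0 p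
  have hN1 : (1:ℝ) ≤ N - 1 := by linarith
  have hN1' : (0:ℝ) < N - 1 := by linarith
  set G := (N-1) ^ (p-1) with hGdef
  clear_value G
  have hG0 : (0:ℝ) < G := by rw [hGdef]; exact Real.rpow_pos_of_pos hN1' _
  have hGN : G * (N-1) ^ (1-p) = 1 := by
    rw [hGdef, ← Real.rpow_add hN1']
    norm_num
  have hG_ge : 1/(N-1) ≤ G := by
    rw [hGdef, Real.rpow_sub hN1', Real.rpow_one]
    have h1 : (1:ℝ) ≤ (N-1) ^ p := Real.one_le_rpow hN1 hp'.le
    rw [div_le_div_iff₀ hN1' hN1', one_mul]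
    exact le_mul_of_one_le_left (by linarith) h1
  -- coefficient inequality I
  have hA : 1 - c ^ p ≤ 1/N := by
    have : 1 - c = 1/N := by rw [hcdef]; ring
    linarith
  have hI : 1 - c ^ p ≤ c ^ p * G := by
    have h2 : c * (1/(N-1)) ≤ c ^ p * G :=
      mul_le_mul hcp_ge hG_ge (by positivity) hcp0.le
    have e : c * (1/(N-1)) = 1/N := by
      rw [hcdef]
      field_simp
    linarith
  -- coefficient inequality II
  have hF5 : N + K ≤ (N-1) ^ p * (K ^ (1-p) * (M+2) ^ p) := by
    apply key_rpow hp34 hp1 h64 (by linarith : N = M + K + 1) hM1 hK1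
    by_cases h3 : n = 3
    · left
      have hr3 : r = 2 := by omega
      constructor
      · rw [hMdef, hNdef, h3, hr3]; norm_num
      · rw [hKdef, hr3]; norm_num
    · right
      have h4 : (4:ℝ) ≤ N := by
        rw [hNdef]
        exact_mod_cast (show 4 ≤ n by omega)
      linarith
  have hII : K * (1 - c ^ p) + c ^ p ≤ c ^ p * G * (K ^ (1-p) * (M+2) ^ p) := by
    have hKMp : (0:ℝ) < K ^ (1-p) * (M+2) ^ p := by
      have := Real.rpow_pos_of_pos (show (0:ℝ) < K by linarith) (1-p)
      have := Real.rpow_pos_of_pos (show (0:ℝ) < M+2 by linarith) p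
      positivity
    have h1 : K * (1 - c ^ p) + c ^ p ≤ (N + K)/N := by
      have a1 : K * (1 - c ^ p) ≤ K * (1/N) :=
        mul_le_mul_of_nonneg_left hA (by linarith)
      have e : (N + K)/N = 1 + K * (1/N) := by field_simp
      rw [e]
      linarith
    have hcG : (N-1) ^ p / N ≤ c ^ p * G := by
      have e : c * G = (N-1) ^ p / N := by
        rw [hcdef, hGdef, Real.rpow_sub hN1', Real.rpow_one]
        field_simp
      have : c * G ≤ c ^ p * G := mul_le_mul_of_nonneg_right hcp_ge hG0.le
      linarith
    have h2 : (N + K)/N ≤ c ^ p * G * (K ^ (1-p) * (M+2) ^ p) := by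
      rw [div_le_iff₀ hNpos]
      calc N + K ≤ (N-1) ^ p * (K ^ (1-p) * (M+2) ^ p) := hF5
        _ = ((N-1) ^ p / N) * (K ^ (1-p) * (M+2) ^ p) * N := by field_simp
        _ ≤ c ^ p * G * (K ^ (1-p) * (M+2) ^ p) * N :=
            mul_le_mul_of_nonneg_right
              (mul_le_mul_of_nonneg_right hcG hKMp.le) hNpos.le
    linarith
  -- final assembly
  have hup : (0:ℝ) ≤ u ^ p := Real.rpow_nonneg hu p
  have hXp : (0:ℝ) ≤ X ^ p := Real.rpow_nonneg hX0 p
  have hmul : ((M+2)*u) ^ p = (M+2) ^ p * u ^ p := Real.mul_rpow (by linarith) hu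
  rw [hmul] at hsplit
  have hM1p : (0:ℝ) ≤ M ^ (1-p) := Real.rpow_nonneg (by linarith) _
  have step1 : c ^ p * ((X + (M+2)*u) ^ p + (K-1) * u ^ p) ≤ c ^ p * T :=
    mul_le_mul_of_nonneg_left hshift hcp0.le
  have step2 : c ^ p * G * (M ^ (1-p) * X ^ p + K ^ (1-p) * ((M+2) ^ p * u ^ p))
      ≤ c ^ p * (X + (M+2)*u) ^ p := by
    have h := mul_le_mul_of_nonneg_left hsplit (mul_nonneg hcp0.le hG0.le)
    have e : c ^ p * G * ((N-1) ^ (1-p) * (X + (M+2)*u) ^ p)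
        = (G * (N-1) ^ (1-p)) * (c ^ p * (X + (M+2)*u) ^ p) := by ring
    rw [e, hGN, one_mul] at h
    exact h
  have step3 : (1 - c ^ p) * S ≤ c ^ p * G * (M ^ (1-p) * X ^ p) := by
    have a1 : (1 - c ^ p) * S ≤ (1 - c ^ p) * (M ^ (1-p) * X ^ p) :=
      mul_le_mul_of_nonneg_left hJen (by linarith)
    have a2 : (1 - c ^ p) * (M ^ (1-p) * X ^ p) ≤ (c ^ p * G) * (M ^ (1-p) * X ^ p) :=
      mul_le_mul_of_nonneg_right hI (mul_nonneg hM1p hXp)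
    linarith
  have step4 : (K * (1 - c ^ p) + c ^ p) * u ^ p
      ≤ c ^ p * G * (K ^ (1-p) * ((M+2) ^ p * u ^ p)) := by
    have h := mul_le_mul_of_nonneg_right hII hup
    have e : c ^ p * G * (K ^ (1-p) * (M+2) ^ p) * u ^ p
        = c ^ p * G * (K ^ (1-p) * ((M+2) ^ p * u ^ p)) := by ring
    linarith [e.le, e.ge]
  linarith [step1, step2, step3, step4]
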